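/- Let λ ∈ ℂ with λ ≠ 3/2 and set a(λ) := i(3 − 2λ)/2. Define on (0,1) the functions w₁(ρ) := a(λ)^{−1/2} (1−ρ)^{5/4 − λ/2} (1+ρ)^{−1/4 + λ/2} and w₂(ρ) := a(λ)^{−1/2} (1−ρ)^{−1/4 + λ/2} (1+ρ)^{5/4 − λ/2}. Then both w₁ and w₂ satisfy the equation w″(ρ) + ((−5 + 12λ − 4λ²)/(4(1−ρ²)²)) w(ρ) = 0 on (0,1), and their Wronskian is constant: w₁(ρ) w₂′(ρ) − w₁′(ρ) w₂(ρ) = 2/i = −2i for all ρ ∈ (0,1). -/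

import Mathlib

noncomputable section

lemma hd12 (μ ν : ℂ) (x : ℝ) (hx : x ∈ Set.Ioo (0:ℝ) 1) :
    HasDerivAt (fun ρ : ℝ => ((1 - ρ : ℝ) : ℂ) ^ μ * ((1 + ρ : ℝ) : ℂ) ^ ν)
      (ν * ((1 - x : ℝ) : ℂ) ^ μ * ((1 + x : ℝ) : ℂ) ^ (ν - 1)
        - μ * ((1 - x : ℝ) : ℂ) ^ (μ - 1) * ((1 + x : ℝ) : ℂ) ^ ν) x := by
  obtain ⟨hx0, hx1⟩ := hx
  have hs1 : (1 : ℂ) - (x : ℂ) ∈ Complex.slitPlane := by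
    rw [show (1 : ℂ) - (x:ℂ) = ((1 - x : ℝ) : ℂ) by push_cast; ring]
    exact Complex.ofReal_mem_slitPlane.2 (by linarith)
  have hs2 : (1 : ℂ) + (x : ℂ) ∈ Complex.slitPlane := by
    rw [show (1 : ℂ) + (x:ℂ) = ((1 + x : ℝ) : ℂ) by push_cast; ring]
    exact Complex.ofReal_mem_slitPlane.2 (by linarith)
  have h1c : HasDerivAt (fun z : ℂ => (1 - z) ^ μ)
      (μ * (1 - (x:ℂ)) ^ (μ - 1) * (0 - 1)) (x : ℂ) :=
    HasDerivAt.cpow_const ((hasDerivAt_const _ (1:ℂ)).sub (hasDerivAt_id _)) hs1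
  have h2c : HasDerivAt (fun z : ℂ => (1 + z) ^ ν)
      (ν * (1 + (x:ℂ)) ^ (ν - 1) * (0 + 1)) (x : ℂ) :=
    HasDerivAt.cpow_const ((hasDerivAt_const _ (1:ℂ)).add (hasDerivAt_id _)) hs2
  have h1 := h1c.comp_ofReal
  have h2 := h2c.comp_ofReal
  have := h1.mul h2
  convert this using 1
  · rfl
  · funext y; simp only [Pi.mul_apply]; push_cast; ring_nf
  · push_cast; ring

lemma w12 (b μ ν : ℂ) (x : ℝ) (hx : x ∈ Set.Ioo (0:ℝ) 1) :
    HasDerivAt (fun ρ : ℝ => b * ((1 - ρ : ℝ) : ℂ) ^ μ * ((1 + ρ : ℝ) : ℂ) ^ ν)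
      (b * (ν * ((1 - x : ℝ) : ℂ) ^ μ * ((1 + x : ℝ) : ℂ) ^ (ν - 1)
        - μ * ((1 - x : ℝ) : ℂ) ^ (μ - 1) * ((1 + x : ℝ) : ℂ) ^ ν)) x := by
  have := (hd12 μ ν x hx).const_mul b
  convert this using 1
  · rfl
  funext y; ring

lemma first12 (b μ ν : ℂ) (x : ℝ) (hx : x ∈ Set.Ioo (0:ℝ) 1) :
    deriv (fun ρ : ℝ => b * ((1 - ρ : ℝ) : ℂ) ^ μ * ((1 + ρ : ℝ) : ℂ) ^ ν) x
      = b * (ν * ((1 - x : ℝ) : ℂ) ^ μ * ((1 + x : ℝ) : ℂ) ^ (ν - 1)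
        - μ * ((1 - x : ℝ) : ℂ) ^ (μ - 1) * ((1 + x : ℝ) : ℂ) ^ ν) :=
  (w12 b μ ν x hx).deriv

lemma second12 (b μ ν : ℂ) (ρ : ℝ) (hρ : ρ ∈ Set.Ioo (0:ℝ) 1) :
    deriv (deriv (fun ρ : ℝ => b * ((1 - ρ : ℝ) : ℂ) ^ μ * ((1 + ρ : ℝ) : ℂ) ^ ν)) ρ
      = b * (ν * ((ν - 1) * ((1 - ρ : ℝ) : ℂ) ^ μ * ((1 + ρ : ℝ) : ℂ) ^ (ν - 1 - 1)
              - μ * ((1 - ρ : ℝ) : ℂ) ^ (μ - 1) * ((1 + ρ : ℝ) : ℂ) ^ (ν - 1))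
           - μ * (ν * ((1 - ρ : ℝ) : ℂ) ^ (μ - 1) * ((1 + ρ : ℝ) : ℂ) ^ (ν - 1)
              - (μ - 1) * ((1 - ρ : ℝ) : ℂ) ^ (μ - 1 - 1) * ((1 + ρ : ℝ) : ℂ) ^ ν)) := by
  have hev : deriv (fun ρ : ℝ => b * ((1 - ρ : ℝ) : ℂ) ^ μ * ((1 + ρ : ℝ) : ℂ) ^ ν)
      =ᶠ[nhds ρ] fun x : ℝ => b * (ν * ((1 - x : ℝ) : ℂ) ^ μ * ((1 + x : ℝ) : ℂ) ^ (ν - 1)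
        - μ * ((1 - x : ℝ) : ℂ) ^ (μ - 1) * ((1 + x : ℝ) : ℂ) ^ ν) :=
    Filter.eventually_of_mem (isOpen_Ioo.mem_nhds hρ) (fun x hx => first12 b μ ν x hx)
  rw [Filter.EventuallyEq.deriv_eq hev]
  have h1 := (hd12 μ (ν - 1) ρ hρ).const_mul ν
  have h2 := (hd12 (μ - 1) ν ρ hρ).const_mul μ
  have h3 := (h1.sub h2).const_mul b
  have h4 : HasDerivAt (fun x : ℝ => b * (ν * ((1 - x : ℝ) : ℂ) ^ μ * ((1 + x : ℝ) : ℂ) ^ (ν - 1)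
        - μ * ((1 - x : ℝ) : ℂ) ^ (μ - 1) * ((1 + x : ℝ) : ℂ) ^ ν))
      (b * (ν * ((ν - 1) * ((1 - ρ : ℝ) : ℂ) ^ μ * ((1 + ρ : ℝ) : ℂ) ^ (ν - 1 - 1)
              - μ * ((1 - ρ : ℝ) : ℂ) ^ (μ - 1) * ((1 + ρ : ℝ) : ℂ) ^ (ν - 1))
           - μ * (ν * ((1 - ρ : ℝ) : ℂ) ^ (μ - 1) * ((1 + ρ : ℝ) : ℂ) ^ (ν - 1)
              - (μ - 1) * ((1 - ρ : ℝ) : ℂ) ^ (μ - 1 - 1) * ((1 + ρ : ℝ) : ℂ) ^ ν))) ρ := by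
    convert h3 using 1
    · rfl
    funext y; simp only [Pi.sub_apply]; ring
  exact h4.deriv

set_option maxHeartbeats 1000000 in
theorem hankel_type_fundamental_system (lam : ℂ) (hlam : lam ≠ 3/2) (b : ℂ)
    (hb : b ^ 2 = (Complex.I * (3 - 2 * lam) / 2)⁻¹) (ρ : ℝ) (hρ : ρ ∈ Set.Ioo (0:ℝ) 1) :
    (deriv (deriv (fun ρ : ℝ =>
        b * ((1 - ρ : ℝ) : ℂ) ^ ((5:ℂ)/4 - lam/2) * ((1 + ρ : ℝ) : ℂ) ^ (-(1:ℂ)/4 + lam/2))) ρ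
      + ((-5 + 12 * lam - 4 * lam ^ 2) / (4 * (1 - (ρ:ℂ) ^ 2) ^ 2))
        * (b * ((1 - ρ : ℝ) : ℂ) ^ ((5:ℂ)/4 - lam/2) * ((1 + ρ : ℝ) : ℂ) ^ (-(1:ℂ)/4 + lam/2))
      = 0)
    ∧ (deriv (deriv (fun ρ : ℝ =>
        b * ((1 - ρ : ℝ) : ℂ) ^ (-(1:ℂ)/4 + lam/2) * ((1 + ρ : ℝ) : ℂ) ^ ((5:ℂ)/4 - lam/2))) ρ
      + ((-5 + 12 * lam - 4 * lam ^ 2) / (4 * (1 - (ρ:ℂ) ^ 2) ^ 2))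
        * (b * ((1 - ρ : ℝ) : ℂ) ^ (-(1:ℂ)/4 + lam/2) * ((1 + ρ : ℝ) : ℂ) ^ ((5:ℂ)/4 - lam/2))
      = 0)
    ∧ ((b * ((1 - ρ : ℝ) : ℂ) ^ ((5:ℂ)/4 - lam/2) * ((1 + ρ : ℝ) : ℂ) ^ (-(1:ℂ)/4 + lam/2))
        * deriv (fun ρ : ℝ =>
            b * ((1 - ρ : ℝ) : ℂ) ^ (-(1:ℂ)/4 + lam/2) * ((1 + ρ : ℝ) : ℂ) ^ ((5:ℂ)/4 - lam/2)) ρ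
      - deriv (fun ρ : ℝ =>
            b * ((1 - ρ : ℝ) : ℂ) ^ ((5:ℂ)/4 - lam/2) * ((1 + ρ : ℝ) : ℂ) ^ (-(1:ℂ)/4 + lam/2)) ρ
        * (b * ((1 - ρ : ℝ) : ℂ) ^ (-(1:ℂ)/4 + lam/2) * ((1 + ρ : ℝ) : ℂ) ^ ((5:ℂ)/4 - lam/2))
      = -2 * Complex.I) := by
  have hρ0 := hρ.1
  have hρ1 := hρ.2
  have hu0 : ((1 - ρ : ℝ) : ℂ) ≠ 0 := Complex.ofReal_ne_zero.2 (by linarith)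
  have hv0 : ((1 + ρ : ℝ) : ℂ) ≠ 0 := Complex.ofReal_ne_zero.2 (by linarith)
  have cu : ∀ c : ℂ, ((1 - ρ : ℝ) : ℂ) ^ (c + 1) = ((1 - ρ : ℝ) : ℂ) ^ c * ((1 - ρ : ℝ) : ℂ) :=
    fun c => by rw [Complex.cpow_add _ _ hu0, Complex.cpow_one]
  have cv : ∀ c : ℂ, ((1 + ρ : ℝ) : ℂ) ^ (c + 1) = ((1 + ρ : ℝ) : ℂ) ^ c * ((1 + ρ : ℝ) : ℂ) :=
    fun c => by rw [Complex.cpow_add _ _ hv0, Complex.cpow_one]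
  have h4 : (4:ℂ) * (((1 - ρ : ℝ) : ℂ) * ((1 + ρ : ℝ) : ℂ)) ^ 2 ≠ 0 :=
    mul_ne_zero (by norm_num) (pow_ne_zero _ (mul_ne_zero hu0 hv0))
  have hsq : (1:ℂ) - (ρ:ℂ)^2 = ((1 - ρ : ℝ) : ℂ) * ((1 + ρ : ℝ) : ℂ) := by push_cast; ring
  have hbfin : b^2 * (3 - 2*lam) = -2 * Complex.I := by
    have h3 : (3:ℂ) - 2*lam ≠ 0 := by
      intro h; apply hlam; linear_combination (-1/2 : ℂ) * h
    rw [hb, inv_eq_one_div]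
    field_simp
    linear_combination Complex.I_mul_I
  refine ⟨?_, ?_, ?_⟩
  · rw [second12 b _ _ ρ hρ]
    have eu1 : ((1 - ρ : ℝ) : ℂ) ^ ((5:ℂ)/4 - lam/2 - 1)
        = ((1 - ρ : ℝ) : ℂ) ^ ((5:ℂ)/4 - lam/2 - 1 - 1) * ((1 - ρ : ℝ) : ℂ) := by
      have := cu ((5:ℂ)/4 - lam/2 - 1 - 1)
      rw [show (5:ℂ)/4 - lam/2 - 1 - 1 + 1 = (5:ℂ)/4 - lam/2 - 1 by ring] at this
      exact this
    have eu0 : ((1 - ρ : ℝ) : ℂ) ^ ((5:ℂ)/4 - lam/2)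
        = ((1 - ρ : ℝ) : ℂ) ^ ((5:ℂ)/4 - lam/2 - 1 - 1) * ((1 - ρ : ℝ) : ℂ) * ((1 - ρ : ℝ) : ℂ) := by
      have := cu ((5:ℂ)/4 - lam/2 - 1)
      rw [show (5:ℂ)/4 - lam/2 - 1 + 1 = (5:ℂ)/4 - lam/2 by ring] at this
      rw [this, eu1]
    have ev1 : ((1 + ρ : ℝ) : ℂ) ^ (-(1:ℂ)/4 + lam/2 - 1)
        = ((1 + ρ : ℝ) : ℂ) ^ (-(1:ℂ)/4 + lam/2 - 1 - 1) * ((1 + ρ : ℝ) : ℂ) := by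
      have := cv (-(1:ℂ)/4 + lam/2 - 1 - 1)
      rw [show -(1:ℂ)/4 + lam/2 - 1 - 1 + 1 = -(1:ℂ)/4 + lam/2 - 1 by ring] at this
      exact this
    have ev0 : ((1 + ρ : ℝ) : ℂ) ^ (-(1:ℂ)/4 + lam/2)
        = ((1 + ρ : ℝ) : ℂ) ^ (-(1:ℂ)/4 + lam/2 - 1 - 1) * ((1 + ρ : ℝ) : ℂ) * ((1 + ρ : ℝ) : ℂ) := by
      have := cv (-(1:ℂ)/4 + lam/2 - 1)
      rw [show -(1:ℂ)/4 + lam/2 - 1 + 1 = -(1:ℂ)/4 + lam/2 by ring] at this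
      rw [this, ev1]
    rw [eu0, eu1, ev0, ev1, hsq, div_mul_eq_mul_div, add_div' _ _ _ h4, div_eq_zero_iff]
    left
    push_cast
    ring
  · rw [second12 b _ _ ρ hρ]
    have eu1 : ((1 - ρ : ℝ) : ℂ) ^ (-(1:ℂ)/4 + lam/2 - 1)
        = ((1 - ρ : ℝ) : ℂ) ^ (-(1:ℂ)/4 + lam/2 - 1 - 1) * ((1 - ρ : ℝ) : ℂ) := by
      have := cu (-(1:ℂ)/4 + lam/2 - 1 - 1)
      rw [show -(1:ℂ)/4 + lam/2 - 1 - 1 + 1 = -(1:ℂ)/4 + lam/2 - 1 by ring] at this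
      exact this
    have eu0 : ((1 - ρ : ℝ) : ℂ) ^ (-(1:ℂ)/4 + lam/2)
        = ((1 - ρ : ℝ) : ℂ) ^ (-(1:ℂ)/4 + lam/2 - 1 - 1) * ((1 - ρ : ℝ) : ℂ) * ((1 - ρ : ℝ) : ℂ) := by
      have := cu (-(1:ℂ)/4 + lam/2 - 1)
      rw [show -(1:ℂ)/4 + lam/2 - 1 + 1 = -(1:ℂ)/4 + lam/2 by ring] at this
      rw [this, eu1]
    have ev1 : ((1 + ρ : ℝ) : ℂ) ^ ((5:ℂ)/4 - lam/2 - 1)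
        = ((1 + ρ : ℝ) : ℂ) ^ ((5:ℂ)/4 - lam/2 - 1 - 1) * ((1 + ρ : ℝ) : ℂ) := by
      have := cv ((5:ℂ)/4 - lam/2 - 1 - 1)
      rw [show (5:ℂ)/4 - lam/2 - 1 - 1 + 1 = (5:ℂ)/4 - lam/2 - 1 by ring] at this
      exact this
    have ev0 : ((1 + ρ : ℝ) : ℂ) ^ ((5:ℂ)/4 - lam/2)
        = ((1 + ρ : ℝ) : ℂ) ^ ((5:ℂ)/4 - lam/2 - 1 - 1) * ((1 + ρ : ℝ) : ℂ) * ((1 + ρ : ℝ) : ℂ) := by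
      have := cv ((5:ℂ)/4 - lam/2 - 1)
      rw [show (5:ℂ)/4 - lam/2 - 1 + 1 = (5:ℂ)/4 - lam/2 by ring] at this
      rw [this, ev1]
    rw [eu0, eu1, ev0, ev1, hsq, div_mul_eq_mul_div, add_div' _ _ _ h4, div_eq_zero_iff]
    left
    push_cast
    ring
  · rw [first12 b ((5:ℂ)/4 - lam/2) (-(1:ℂ)/4 + lam/2) ρ hρ,
      first12 b (-(1:ℂ)/4 + lam/2) ((5:ℂ)/4 - lam/2) ρ hρ]
    have R1 : ((1 - ρ : ℝ) : ℂ) ^ ((5:ℂ)/4 - lam/2) * ((1 - ρ : ℝ) : ℂ) ^ (-(1:ℂ)/4 + lam/2)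
        = ((1 - ρ : ℝ) : ℂ) := by
      rw [← Complex.cpow_add _ _ hu0,
        show (5:ℂ)/4 - lam/2 + (-(1:ℂ)/4 + lam/2) = 1 by ring, Complex.cpow_one]
    have R2 : ((1 - ρ : ℝ) : ℂ) ^ ((5:ℂ)/4 - lam/2) * ((1 - ρ : ℝ) : ℂ) ^ (-(1:ℂ)/4 + lam/2 - 1)
        = 1 := by
      rw [← Complex.cpow_add _ _ hu0,
        show (5:ℂ)/4 - lam/2 + (-(1:ℂ)/4 + lam/2 - 1) = 0 by ring, Complex.cpow_zero]
    have R3 : ((1 - ρ : ℝ) : ℂ) ^ ((5:ℂ)/4 - lam/2 - 1) * ((1 - ρ : ℝ) : ℂ) ^ (-(1:ℂ)/4 + lam/2)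
        = 1 := by
      rw [← Complex.cpow_add _ _ hu0,
        show (5:ℂ)/4 - lam/2 - 1 + (-(1:ℂ)/4 + lam/2) = 0 by ring, Complex.cpow_zero]
    have S1 : ((1 + ρ : ℝ) : ℂ) ^ (-(1:ℂ)/4 + lam/2) * ((1 + ρ : ℝ) : ℂ) ^ ((5:ℂ)/4 - lam/2)
        = ((1 + ρ : ℝ) : ℂ) := by
      rw [← Complex.cpow_add _ _ hv0,
        show -(1:ℂ)/4 + lam/2 + ((5:ℂ)/4 - lam/2) = 1 by ring, Complex.cpow_one]
    have S2 : ((1 + ρ : ℝ) : ℂ) ^ (-(1:ℂ)/4 + lam/2) * ((1 + ρ : ℝ) : ℂ) ^ ((5:ℂ)/4 - lam/2 - 1)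
        = 1 := by
      rw [← Complex.cpow_add _ _ hv0,
        show -(1:ℂ)/4 + lam/2 + ((5:ℂ)/4 - lam/2 - 1) = 0 by ring, Complex.cpow_zero]
    have S3 : ((1 + ρ : ℝ) : ℂ) ^ (-(1:ℂ)/4 + lam/2 - 1) * ((1 + ρ : ℝ) : ℂ) ^ ((5:ℂ)/4 - lam/2)
        = 1 := by
      rw [← Complex.cpow_add _ _ hv0,
        show -(1:ℂ)/4 + lam/2 - 1 + ((5:ℂ)/4 - lam/2) = 0 by ring, Complex.cpow_zero]
    have hsum : ((1 - ρ : ℝ) : ℂ) + ((1 + ρ : ℝ) : ℂ) = 2 := by push_cast; ring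
    linear_combination
      (b^2 * ((5:ℂ)/4 - lam/2) * (((1 + ρ : ℝ) : ℂ) ^ (-(1:ℂ)/4 + lam/2)
          * ((1 + ρ : ℝ) : ℂ) ^ ((5:ℂ)/4 - lam/2 - 1))
        - b^2 * (-(1:ℂ)/4 + lam/2) * (((1 + ρ : ℝ) : ℂ) ^ (-(1:ℂ)/4 + lam/2 - 1)
          * ((1 + ρ : ℝ) : ℂ) ^ ((5:ℂ)/4 - lam/2))) * R1
      - b^2 * (-(1:ℂ)/4 + lam/2) * (((1 + ρ : ℝ) : ℂ) ^ (-(1:ℂ)/4 + lam/2)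
          * ((1 + ρ : ℝ) : ℂ) ^ ((5:ℂ)/4 - lam/2)) * R2
      + b^2 * ((5:ℂ)/4 - lam/2) * (((1 + ρ : ℝ) : ℂ) ^ (-(1:ℂ)/4 + lam/2)
          * ((1 + ρ : ℝ) : ℂ) ^ ((5:ℂ)/4 - lam/2)) * R3
      + (b^2 * ((5:ℂ)/4 - lam/2) - b^2 * (-(1:ℂ)/4 + lam/2)) * S1
      + b^2 * ((5:ℂ)/4 - lam/2) * ((1 - ρ : ℝ) : ℂ) * S2
      - b^2 * (-(1:ℂ)/4 + lam/2) * ((1 - ρ : ℝ) : ℂ) * S3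
      + b^2 * ((3:ℂ)/2 - lam) * hsum
      + hbfin
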